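/- With the mixture-of-power utility $U$, the shifted argument $\hat\chi(x)$, $A = 1 + \frac{L\gamma}{\alpha} > 0$, and $f(x) = x^{1-\alpha} + x^{1-\beta}$: $\hat\chi(x) > 0$ for all sufficiently large $x$, and $\lim_{x\to\infty} \frac{\hat\chi(x)^{1-\alpha} + \hat\chi(x)^{1-\beta}}{x^{1-\alpha} + x^{1-\beta}} = A^{1-\alpha}$. -/

import Mathlib

open Filter

/-- With `A = 1 + Lγ/α > 0`, the shifted argument `χ̂(x)` is
eventually positive and `f(χ̂(x))/f(x) → A^(1-α)`. -/
theorem f_shifted_over_f_tendsto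
    (c₁ c₂ α β L γ : ℝ) (hc₁ : 0 < c₁) (hc₂ : 0 ≤ c₂)
    (hα : 0 < α) (hαβ : α < β) (hα1 : α ≠ 1) (hβ1 : β ≠ 1) (hγ : 0 < γ)
    (A : ℝ) (hA : A = 1 + L * γ / α) (hApos : 0 < A)
    (chiHat : ℝ → ℝ)
    (hchi : ∀ x : ℝ, chiHat x = x + L * γ *
      ((c₁ * x ^ (-α) + c₂ * x ^ (-β)) /
        (c₁ * α * x ^ (-α - 1) + c₂ * β * x ^ (-β - 1)))) :
    (∀ᶠ x in atTop, 0 < chiHat x) ∧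
    Tendsto (fun x : ℝ =>
        (chiHat x ^ (1 - α) + chiHat x ^ (1 - β)) / (x ^ (1 - α) + x ^ (1 - β)))
      atTop (nhds (A ^ (1 - α))) := by
  have hβ : 0 < β := lt_trans hα hαβ
  set u : ℝ → ℝ := fun x => x ^ (α - β) with hu_def
  have hu : Tendsto u atTop (nhds 0) := by
    have := tendsto_rpow_neg_atTop (y := β - α) (by linarith)
    simpa [hu_def, neg_sub] using this
  set g : ℝ → ℝ := fun x =>
      1 + L * γ * ((c₁ + c₂ * u x) / (c₁ * α + c₂ * β * u x)) with hg_def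
  have hden0 : c₁ * α ≠ 0 := by positivity
  have hg : Tendsto g atTop (nhds A) := by
    have h1 : Tendsto (fun x => (c₁ + c₂ * u x) / (c₁ * α + c₂ * β * u x)) atTop
        (nhds ((c₁ + c₂ * 0) / (c₁ * α + c₂ * β * 0))) := by
      apply Tendsto.div
      · exact (hu.const_mul c₂).const_add c₁
      · have := (hu.const_mul (c₂ * β)).const_add (c₁ * α)
        simpa [mul_assoc] using this
      · simpa using hden0
    have h2 := (h1.const_mul (L * γ)).const_add 1
    have hval : 1 + L * γ * ((c₁ + c₂ * 0) / (c₁ * α + c₂ * β * 0)) = A := by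
      rw [hA]; field_simp; ring
    rw [hval] at h2
    exact h2
  have hchi_eq : ∀ᶠ x in atTop, chiHat x = x * g x := by
    filter_upwards [eventually_gt_atTop 0] with x hx
    have ht : (0:ℝ) < x ^ (-α - 1) := Real.rpow_pos_of_pos hx _
    have hupos : (0:ℝ) < u x := Real.rpow_pos_of_pos hx _
    have hDpos : 0 < c₁ * α + c₂ * β * u x := by positivity
    have e1 : x ^ (-α) = x * x ^ (-α - 1) := by
      have h := Real.rpow_add hx 1 (-α - 1)
      rw [Real.rpow_one, show (1:ℝ) + (-α - 1) = -α by ring] at h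
      exact h
    have e3 : x ^ (-β - 1) = x ^ (-α - 1) * u x := by
      have h := Real.rpow_add hx (-α - 1) (α - β)
      rw [show -α - 1 + (α - β) = -β - 1 by ring] at h
      exact h
    have e2 : x ^ (-β) = x * x ^ (-α - 1) * u x := by
      have h := Real.rpow_add hx (-α) (α - β)
      rw [show -α + (α - β) = -β by ring] at h
      rw [h, e1]
    rw [hchi x, hg_def, e1, e2, e3]
    field_simp
  have hgpos : ∀ᶠ x in atTop, 0 < g x := hg.eventually (eventually_gt_nhds hApos)
  have hpos : ∀ᶠ x in atTop, 0 < chiHat x := by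
    filter_upwards [hchi_eq, hgpos, eventually_gt_atTop 0] with x he hgx hx
    rw [he]; exact mul_pos hx hgx
  refine ⟨hpos, ?_⟩
  have hH : Tendsto (fun x => (g x ^ (1 - α) + u x * g x ^ (1 - β)) / (1 + u x))
      atTop (nhds (A ^ (1 - α))) := by
    have t1 : Tendsto (fun x => g x ^ (1 - α)) atTop (nhds (A ^ (1 - α))) :=
      hg.rpow_const (Or.inl hApos.ne')
    have t2 : Tendsto (fun x => g x ^ (1 - β)) atTop (nhds (A ^ (1 - β))) :=
      hg.rpow_const (Or.inl hApos.ne')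
    have := (t1.add (hu.mul t2)).div (hu.const_add 1) (by norm_num)
    convert this using 2 <;> simp
  refine Tendsto.congr' ?_ hH
  filter_upwards [hchi_eq, hgpos, eventually_gt_atTop 0] with x he hgx hx
  have hx1 : (0:ℝ) < x ^ (1 - α) := Real.rpow_pos_of_pos hx _
  have hupos : (0:ℝ) < u x := Real.rpow_pos_of_pos hx _
  have e4 : x ^ (1 - β) = x ^ (1 - α) * u x := by
    have h := Real.rpow_add hx (1 - α) (α - β)
    rw [show 1 - α + (α - β) = 1 - β by ring] at h
    exact h
  have e5 : chiHat x ^ (1 - α) = x ^ (1 - α) * g x ^ (1 - α) := by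
    rw [he, Real.mul_rpow hx.le hgx.le]
  have e6 : chiHat x ^ (1 - β) = x ^ (1 - α) * (u x * g x ^ (1 - β)) := by
    rw [he, Real.mul_rpow hx.le hgx.le, e4]; ring
  rw [e4, e5, e6]
  rw [← mul_add, show x ^ (1 - α) + x ^ (1 - α) * u x = x ^ (1 - α) * (1 + u x) by ring,
    mul_div_mul_left _ _ hx1.ne']
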